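/- arXiv:2511.15460 — 3 statements merged into one kernel-verified Lean document; each statement's English description precedes it below -/
import Mathlib

section
/- Let M be a matroid on a finite ground set E with an injective weight function w : E → ℝ, let B be a minimum-weight base of M, and let e ∈ B. If every element of E\{e} lies in the closure of B\{e} in M, then B\{e} is a minimum-weight base of the restriction M|(E\{e}). Otherwise, letting f be the element of minimum weight among the elements of E\{e} not lying in the closure of B\{e} in M, the set (B\{e}) ∪ {f} is a minimum-weight base of M|(E\{e}). -/
open Set Matroid

variable {α : Type*}

/-- The rank of a set `A` in a matroid `M`: the size of a largest independent subset of `A`. -/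
noncomputable def mrk (M : Matroid α) (A : Set α) : ℕ :=
  sSup {n : ℕ | ∃ I, M.Indep I ∧ I ⊆ A ∧ I.ncard = n}

/-- The total weight of a set of elements. -/
noncomputable def wSum (w : α → ℝ) (S : Set α) : ℝ := ∑ᶠ e ∈ S, w e

/-- `B` is a minimum-weight base of `M` with respect to the weights `w`. -/
def IsMinWeightBase (M : Matroid α) (w : α → ℝ) (B : Set α) : Prop :=
  M.IsBase B ∧ ∀ B', M.IsBase B' → wSum w B ≤ wSum w B'

/-- A circuit: an inclusion-wise minimal dependent set. -/
def IsCircuit (M : Matroid α) (C : Set α) : Prop :=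
  C ⊆ M.E ∧ ¬ M.Indep C ∧ ∀ x ∈ C, M.Indep (C \ {x})

/-- The fractional base packing number `Φ_M`. -/
noncomputable def PhiM (M : Matroid α) : ℝ :=
  sInf {x : ℝ | ∃ A ⊆ M.E, mrk M (M.E \ A) < mrk M M.E ∧
    x = (A.ncard : ℝ) / ((mrk M M.E : ℝ) - (mrk M (M.E \ A) : ℝ))}

/-- `A` attains the fractional packing number of `M`. -/
def AttainsPhi (M : Matroid α) (A : Set α) : Prop :=
  A ⊆ M.E ∧ mrk M (M.E \ A) < mrk M M.E ∧
    (A.ncard : ℝ) / ((mrk M M.E : ℝ) - (mrk M (M.E \ A) : ℝ)) = PhiM M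

/-- The fractional base covering number `β_M`. -/
noncomputable def BetaM (M : Matroid α) : ℝ :=
  sSup {x : ℝ | ∃ A ⊆ M.E, A.Nonempty ∧ x = (A.ncard : ℝ) / (mrk M A : ℝ)}

/-- The relative load of an element `e` in a base collection `Bs` of size `k`. -/
noncomputable def relLoad {k : ℕ} (Bs : Fin k → Set α) (e : α) : ℝ :=
  (({i | e ∈ Bs i} : Set (Fin k)).ncard : ℝ) / (k : ℝ)
lemma wSum_eq_finset_sum (w : α → ℝ) {S : Set α} (hS : S.Finite) :
    wSum w S = ∑ x ∈ hS.toFinset, w x := by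
  rw [wSum, ← finsum_mem_coe_finset, hS.coe_toFinset]

lemma wSum_insert (w : α → ℝ) {S : Set α} (hS : S.Finite) {x : α} (hx : x ∉ S) :
    wSum w (insert x S) = w x + wSum w S := by
  classical
  rw [wSum_eq_finset_sum w (hS.insert x), wSum_eq_finset_sum w hS]
  rw [show (hS.insert x).toFinset = insert x hS.toFinset by ext y; simp]
  rw [Finset.sum_insert (by simpa using hx)]

lemma wSum_diff_sing (w : α → ℝ) {S : Set α} (hS : S.Finite) {x : α} (hx : x ∈ S) :
    wSum w S = w x + wSum w (S \ {x}) := by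
  have h : S = insert x (S \ {x}) := by simp [insert_diff_singleton, insert_eq_of_mem hx]
  nth_rw 1 [h]
  exact wSum_insert w (hS.diff) (by simp)

/-- Deletion step for a dynamic minimum-weight base: deleting `e ∈ B` from the ground set,
either `B \ {e}` spans everything and remains a minimum-weight base of the restriction,
or the minimum-weight element `f` not spanned by `B \ {e}` is added to obtain a
minimum-weight base of the restriction. -/
theorem stmt_1 (M : Matroid α) (hfin : M.E.Finite) (w : α → ℝ) (hw : Set.InjOn w M.E)
    (B : Set α) (hB : IsMinWeightBase M w B) (e : α) (heB : e ∈ B) :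
    ((M.E \ {e} ⊆ M.closure (B \ {e})) →
      IsMinWeightBase (M ↾ (M.E \ {e})) w (B \ {e})) ∧
    (∀ f, f ∈ M.E \ {e} → f ∉ M.closure (B \ {e}) →
      (∀ g, g ∈ M.E \ {e} → g ∉ M.closure (B \ {e}) → w f ≤ w g) →
      IsMinWeightBase (M ↾ (M.E \ {e})) w (insert f (B \ {e}))) := by
  classical
  obtain ⟨hBb, hBmin⟩ := hB
  have hBE : B ⊆ M.E := hBb.subset_ground
  have hBfin : B.Finite := hfin.subset hBE
  have heE : e ∈ M.E := hBE heB
  have hXE : M.E \ {e} ⊆ M.E := diff_subset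
  have hBeI : M.Indep (B \ {e}) := hBb.indep.subset diff_subset
  have hecl : e ∉ M.closure (B \ {e}) := hBb.indep.notMem_closure_diff_of_mem heB
  have hBeX : B \ {e} ⊆ M.E \ {e} := diff_subset_diff_left hBE
  have hwB : wSum w B = w e + wSum w (B \ {e}) := wSum_diff_sing w hBfin heB
  constructor
  · -- Part 1
    intro hsp
    have hbasis : M.IsBasis (B \ {e}) (M.E \ {e}) :=
      hBeI.isBasis_of_subset_of_subset_closure hBeX hsp
    refine ⟨(isBase_restrict_iff hXE).2 hbasis, ?_⟩
    intro B' hB'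
    have hB'basis : M.IsBasis B' (M.E \ {e}) := (isBase_restrict_iff hXE).1 hB'
    have hB'X : B' ⊆ M.E \ {e} := hB'basis.subset
    have hB'fin : B'.Finite := hfin.subset (hB'X.trans hXE)
    have heB' : e ∉ B' := fun h => (hB'X h).2 rfl
    -- e ∉ closure B'
    have hclX : M.closure (M.E \ {e}) = M.closure (B \ {e}) := by
      refine subset_antisymm ?_ (M.closure_subset_closure hBeX)
      exact M.closure_subset_closure_of_subset_closure hsp
    have hecl' : e ∉ M.closure B' := by
      rw [hB'basis.closure_eq_closure, hclX]; exact hecl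
    have hins : M.Indep (insert e B') := by
      rw [hB'basis.indep.insert_indep_iff_of_notMem heB']
      exact ⟨heE, hecl'⟩
    have hinsbase : M.IsBase (insert e B') := by
      refine hins.isBase_of_ground_subset_closure ?_
      intro x hx
      by_cases hxe : x = e
      · subst hxe
        exact M.subset_closure _ hins.subset_ground (mem_insert _ _)
      · exact M.closure_subset_closure (subset_insert _ _)
          (hB'basis.subset_closure ⟨hx, hxe⟩)
    have := hBmin _ hinsbase
    rw [wSum_insert w hB'fin heB', hwB] at this
    linarith
  · -- Part 2
    intro f hfX hfcl hfmin
    have hfB : f ∉ B \ {e} := fun h => hfcl (M.subset_closure _ (hBeX.trans hXE) h)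
    have hB''I : M.Indep (insert f (B \ {e})) := by
      rw [hBeI.insert_indep_iff_of_notMem hfB]
      exact ⟨hfX.1, hfcl⟩
    have hB''X : insert f (B \ {e}) ⊆ M.E \ {e} := insert_subset hfX hBeX
    have hB''fin : (insert f (B \ {e})).Finite := (hBfin.diff).insert f
    -- insert f (B \ {e}) is a base of M
    have hcard : (insert f (B \ {e})).ncard = B.ncard := by
      rw [ncard_insert_of_notMem hfB (hBfin.diff),
        ncard_diff_singleton_add_one heB hBfin]
    have hB''base : M.IsBase (insert f (B \ {e})) := by
      obtain ⟨B₂, hB₂base, hsub, hsub2⟩ := hB''I.exists_isBase_subset_union_isBase hBb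
      have hB₂fin : B₂.Finite := hfin.subset hB₂base.subset_ground
      have : insert f (B \ {e}) = B₂ :=
        eq_of_subset_of_ncard_le hsub
          (by rw [hcard, hB₂base.ncard_eq_ncard_of_isBase hBb]) hB₂fin
      rwa [this]
    have hB''basis : M.IsBasis (insert f (B \ {e})) (M.E \ {e}) := by
      refine hB''I.isBasis_of_subset_of_subset_closure hB''X ?_
      rw [hB''base.closure_eq]; exact hXE
    refine ⟨(isBase_restrict_iff hXE).2 hB''basis, ?_⟩
    intro B' hB'
    have hB'basis : M.IsBasis B' (M.E \ {e}) := (isBase_restrict_iff hXE).1 hB'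
    have hB'X : B' ⊆ M.E \ {e} := hB'basis.subset
    have hB'fin : B'.Finite := hfin.subset (hB'X.trans hXE)
    have heB' : e ∉ B' := fun h => (hB'X h).2 rfl
    -- B' is a base of M
    have hB'base : M.IsBase B' := by
      refine hB'basis.indep.isBase_of_ground_subset_closure ?_
      rw [hB'basis.closure_eq_closure]
      have : M.E ⊆ M.closure (insert f (B \ {e})) := by
        rw [hB''base.closure_eq]
      exact this.trans (M.closure_subset_closure hB''X)
    -- exchange: find g ∈ B' with g ∉ closure (B \ {e}) and insert e (B' \ {g}) a base
    set F := M.closure (B \ {e}) with hF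
    have hIind : M.Indep (B' ∩ F) := hB'base.indep.subset inter_subset_left
    have heI : e ∉ B' ∩ F := fun h => heB' h.1
    have heclI : e ∉ M.closure (B' ∩ F) := by
      intro h
      have h2 : M.closure (B' ∩ F) ⊆ F :=
        (M.closure_subset_closure inter_subset_right).trans
          (by rw [hF, M.closure_closure])
      exact hecl (h2 h)
    have hJ : M.Indep (insert e (B' ∩ F)) := by
      rw [hIind.insert_indep_iff_of_notMem heI]
      exact ⟨heE, heclI⟩
    obtain ⟨B₂, hB₂base, hJ₂, hsub2⟩ := hJ.exists_isBase_subset_union_isBase hB'base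
    have hB₂fin : B₂.Finite := hfin.subset hB₂base.subset_ground
    have heB₂ : e ∈ B₂ := hJ₂ (mem_insert _ _)
    have hB₂sub : B₂ \ {e} ⊆ B' := by
      intro x hx
      rcases hsub2 hx.1 with h | h
      · rcases h with h | h
        · exact absurd h hx.2
        · exact h.1
      · exact h
    have hcard₂ : (B₂ \ {e}).ncard + 1 = B'.ncard := by
      rw [ncard_diff_singleton_add_one heB₂ hB₂fin]
      exact hB₂base.ncard_eq_ncard_of_isBase hB'base
    have hcardD : (B' \ B₂).ncard = 1 := by
      have h1 : B' \ B₂ = B' \ (B₂ \ {e}) := by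
        ext x
        simp only [mem_diff, mem_singleton_iff]
        constructor
        · rintro ⟨hx1, hx2⟩; exact ⟨hx1, fun h => hx2 h.1⟩
        · rintro ⟨hx1, hx2⟩
          refine ⟨hx1, fun h => hx2 ⟨h, fun he' => heB' (he' ▸ hx1)⟩⟩
      rw [h1, ncard_diff hB₂sub (hB₂fin.diff), ← hcard₂]
      omega
    obtain ⟨g, hg⟩ := ncard_eq_one.1 hcardD
    have hgB' : g ∈ B' := by have : g ∈ B' \ B₂ := hg ▸ rfl; exact this.1
    have hgB₂ : g ∉ B₂ := by have : g ∈ B' \ B₂ := hg ▸ rfl; exact this.2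
    have hgF : g ∉ F := fun h => hgB₂ (hJ₂ (mem_insert_of_mem _ ⟨hgB', h⟩))
    have hwfg : w f ≤ w g := hfmin g (hB'X hgB') hgF
    have hB₂eq : B₂ = insert e (B' \ {g}) := by
      apply subset_antisymm
      · intro x hx
        by_cases hxe : x = e
        · exact hxe ▸ mem_insert _ _
        · refine mem_insert_of_mem _ ⟨hB₂sub ⟨hx, hxe⟩, ?_⟩
          simp only [mem_singleton_iff]
          rintro rfl; exact hgB₂ hx
      · rintro x (rfl | ⟨hx1, hx2⟩)
        · exact heB₂
        · by_contra hxB₂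
          have : x ∈ B' \ B₂ := ⟨hx1, hxB₂⟩
          rw [hg] at this
          exact hx2 this
    have hwB₂ : wSum w B₂ = w e + (wSum w B' - w g) := by
      rw [hB₂eq, wSum_insert w (hB'fin.diff) (fun h => heB' h.1)]
      have := wSum_diff_sing w hB'fin hgB'
      linarith
    have hmin₂ := hBmin _ hB₂base
    rw [hwB, hwB₂] at hmin₂
    rw [wSum_insert w (hBfin.diff) hfB]
    linarith
end

section
/- Let M be a matroid on a finite ground set E with rk(E) ≥ 1, and let S and T be two subsets of E that both attain Φ_M. If T \ S ≠ ∅, then rk(E\S) − rk(E\(S∪T)) ≥ 1 and |T \ S| / (rk(E\S) − rk(E\(S∪T))) = Φ_M; that is, the set T \ S attains the fractional packing number of the restriction M|(E\S), and that packing number equals Φ_M. -/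
open Set Matroid

variable {α : Type*}

lemma mrk_eq_basis' {M : Matroid α} {X I : Set α} (hX : X.Finite) (hI : M.IsBasis' I X) :
    mrk M X = I.ncard := by
  apply IsGreatest.csSup_eq
  constructor
  · exact ⟨I, hI.indep, hI.subset, rfl⟩
  · rintro n ⟨J, hJ, hJX, rfl⟩
    obtain ⟨K, hK, hJK⟩ := hJ.subset_isBasis'_of_subset hJX
    have : K.ncard = I.ncard := by
      have := hK.encard_eq_encard hI
      rw [Set.ncard_def, this, ← Set.ncard_def]
    rw [← this]
    exact Set.ncard_le_ncard hJK (hX.subset hK.subset)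

lemma le_mrk {M : Matroid α} {X J : Set α} (hX : X.Finite) (hJ : M.Indep J) (hJX : J ⊆ X) :
    J.ncard ≤ mrk M X := by
  obtain ⟨I, hI⟩ := M.exists_isBasis' X
  rw [mrk_eq_basis' hX hI]
  obtain ⟨K, hK, hJK⟩ := hJ.subset_isBasis'_of_subset hJX
  have : K.ncard = I.ncard := by
    have := hK.encard_eq_encard hI
    rw [Set.ncard_def, this, ← Set.ncard_def]
  rw [← this]
  exact Set.ncard_le_ncard hJK (hX.subset hK.subset)

lemma mrk_mono {M : Matroid α} {X Y : Set α} (hY : Y.Finite) (hXY : X ⊆ Y) :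
    mrk M X ≤ mrk M Y := by
  obtain ⟨I, hI⟩ := M.exists_isBasis' X
  rw [mrk_eq_basis' (hY.subset hXY) hI]
  exact le_mrk hY hI.indep (hI.subset.trans hXY)

lemma mrk_submod (M : Matroid α) {X Y : Set α} (hX : X.Finite) (hY : Y.Finite) :
    mrk M (X ∩ Y) + mrk M (X ∪ Y) ≤ mrk M X + mrk M Y := by
  obtain ⟨I, hI⟩ := M.exists_isBasis' (X ∩ Y)
  obtain ⟨J, hJ, hIJ⟩ := hI.indep.subset_isBasis'_of_subset
    (hI.subset.trans (Set.inter_subset_left.trans Set.subset_union_left))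
  have hJfin : J.Finite := (hX.union hY).subset hJ.subset
  rw [mrk_eq_basis' (hX.inter_of_left Y) hI, mrk_eq_basis' (hX.union hY) hJ]
  have h1 : (J ∩ X).ncard ≤ mrk M X :=
    le_mrk hX (hJ.indep.subset Set.inter_subset_left) Set.inter_subset_right
  have h2 : (J ∩ Y).ncard ≤ mrk M Y :=
    le_mrk hY (hJ.indep.subset Set.inter_subset_left) Set.inter_subset_right
  have hU : (J ∩ X) ∪ (J ∩ Y) = J := by
    rw [← Set.inter_union_distrib_left, Set.inter_eq_self_of_subset_left hJ.subset]
  have hInt : I ⊆ (J ∩ X) ∩ (J ∩ Y) := by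
    rw [Set.inter_inter_inter_comm, Set.inter_self]
    exact Set.subset_inter hIJ hI.subset
  have hcard := Set.ncard_inter_add_ncard_union (J ∩ X) (J ∩ Y)
    (hJfin.subset Set.inter_subset_left) (hJfin.subset Set.inter_subset_left)
  rw [hU] at hcard
  have hIle : I.ncard ≤ ((J ∩ X) ∩ (J ∩ Y)).ncard :=
    Set.ncard_le_ncard hInt (hJfin.subset (Set.inter_subset_left.trans Set.inter_subset_left))
  omega

lemma mrk_diff_le (M : Matroid α) {X : Set α} (hX : X.Finite) (A : Set α) (hA : A.Finite) :
    mrk M X ≤ mrk M (X \ A) + A.ncard := by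
  obtain ⟨I, hI⟩ := M.exists_isBasis' X
  have hIfin : I.Finite := hX.subset hI.subset
  rw [mrk_eq_basis' hX hI]
  have h1 : (I \ A).ncard ≤ mrk M (X \ A) :=
    le_mrk (hX.diff (t := A)) (hI.indep.subset Set.diff_subset)
      (Set.diff_subset_diff_left hI.subset)
  have h2 : (I ∩ A).ncard ≤ A.ncard := Set.ncard_le_ncard Set.inter_subset_right hA
  have h3 : (I \ A).ncard + (I ∩ A).ncard = I.ncard := by
    rw [← Set.ncard_union_eq (disjoint_sdiff_left.mono_right Set.inter_subset_right)
      (hIfin.subset Set.diff_subset) (hIfin.subset Set.inter_subset_left),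
      Set.diff_union_inter]
  omega

lemma mrk_restrict (M : Matroid α) {R X : Set α} (hXR : X ⊆ R) :
    mrk (M ↾ R) X = mrk M X := by
  unfold mrk
  congr 1
  ext n
  constructor
  · rintro ⟨I, hI, hIX, rfl⟩
    exact ⟨I, (Matroid.restrict_indep_iff.1 hI).1, hIX, rfl⟩
  · rintro ⟨I, hI, hIX, rfl⟩
    exact ⟨I, Matroid.restrict_indep_iff.2 ⟨hI, hIX.trans hXR⟩, hIX, rfl⟩

lemma one_le_ratio {M : Matroid α} (hfin : M.E.Finite) {A : Set α} (hA : A ⊆ M.E)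
    (hlt : mrk M (M.E \ A) < mrk M M.E) :
    1 ≤ (A.ncard : ℝ) / ((mrk M M.E : ℝ) - (mrk M (M.E \ A) : ℝ)) := by
  have hd : (0 : ℝ) < (mrk M M.E : ℝ) - (mrk M (M.E \ A) : ℝ) := by
    have := (Nat.cast_lt (α := ℝ)).2 hlt
    linarith
  rw [le_div_iff₀ hd, one_mul]
  have := mrk_diff_le M hfin A (hfin.subset hA)
  have h2 : (mrk M M.E : ℝ) ≤ (mrk M (M.E \ A) : ℝ) + (A.ncard : ℝ) := by exact_mod_cast this
  linarith

lemma phiM_bddBelow {M : Matroid α} (hfin : M.E.Finite) :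
    (1 : ℝ) ∈ lowerBounds {x : ℝ | ∃ A ⊆ M.E, mrk M (M.E \ A) < mrk M M.E ∧
      x = (A.ncard : ℝ) / ((mrk M M.E : ℝ) - (mrk M (M.E \ A) : ℝ))} := by
  rintro x ⟨A, hA, hlt, rfl⟩
  exact one_le_ratio hfin hA hlt

lemma phiM_le {M : Matroid α} (hfin : M.E.Finite) {A : Set α} (hA : A ⊆ M.E)
    (hlt : mrk M (M.E \ A) < mrk M M.E) :
    PhiM M ≤ (A.ncard : ℝ) / ((mrk M M.E : ℝ) - (mrk M (M.E \ A) : ℝ)) :=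
  csInf_le ⟨1, phiM_bddBelow hfin⟩ ⟨A, hA, hlt, rfl⟩


/-- Well-definedness of the ideal relative loads: if `S` and `T` both attain `Φ_M` and
`T \ S ≠ ∅`, then `T \ S` attains the packing number of the restriction `M|(E \ S)`,
which equals `Φ_M`. -/
theorem stmt_6 (M : Matroid α) (hfin : M.E.Finite) (hrk : 1 ≤ mrk M M.E)
    (S T : Set α) (hS : AttainsPhi M S) (hT : AttainsPhi M T)
    (hTS : (T \ S).Nonempty) :
    mrk M (M.E \ (S ∪ T)) < mrk M (M.E \ S) ∧
    ((T \ S).ncard : ℝ) / ((mrk M (M.E \ S) : ℝ) - (mrk M (M.E \ (S ∪ T)) : ℝ)) = PhiM M ∧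
    AttainsPhi (M ↾ (M.E \ S)) (T \ S) ∧
    PhiM (M ↾ (M.E \ S)) = PhiM M := by
  obtain ⟨hSE, hSlt, hSeq⟩ := hS
  obtain ⟨hTE, hTlt, hTeq⟩ := hT
  have hSfin : S.Finite := hfin.subset hSE
  have hTfin : T.Finite := hfin.subset hTE
  set a := mrk M M.E with ha
  set s := mrk M (M.E \ S) with hs
  set t := mrk M (M.E \ T) with ht
  set u := mrk M (M.E \ (S ∪ T)) with hu
  set i := mrk M (M.E \ (S ∩ T)) with hi
  set φ := PhiM M with hφ
  -- φ ≥ 1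
  have hφ1 : 1 ≤ φ := hSeq ▸ one_le_ratio hfin hSE hSlt
  have hφ0 : (0 : ℝ) < φ := lt_of_lt_of_le one_pos hφ1
  -- nat rank facts
  have hus : u ≤ s := mrk_mono (hfin.diff (t := S)) (Set.diff_subset_diff_right Set.subset_union_left)
  have hia : i ≤ a := mrk_mono hfin Set.diff_subset
  have hua : u < a := lt_of_le_of_lt hus hSlt
  have hsubmod : u + i ≤ s + t := by
    have h := mrk_submod M (hfin.diff (t := S)) (hfin.diff (t := T))
    have e1 : (M.E \ S) ∩ (M.E \ T) = M.E \ (S ∪ T) := by rw [Set.diff_inter_diff]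
    have e2 : (M.E \ S) ∪ (M.E \ T) = M.E \ (S ∩ T) := by
      rw [Set.diff_inter]
    rw [e1, e2] at h
    exact h
  -- real-valued basic equalities
  have hdS : (0 : ℝ) < (a : ℝ) - s := by
    have := (Nat.cast_lt (α := ℝ)).2 hSlt; linarith
  have hdT : (0 : ℝ) < (a : ℝ) - t := by
    have := (Nat.cast_lt (α := ℝ)).2 hTlt; linarith
  have hdU : (0 : ℝ) < (a : ℝ) - u := by
    have := (Nat.cast_lt (α := ℝ)).2 hua; linarith
  have hSval : (S.ncard : ℝ) = φ * ((a : ℝ) - s) := by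
    rw [div_eq_iff hdS.ne'] at hSeq; exact hSeq
  have hTval : (T.ncard : ℝ) = φ * ((a : ℝ) - t) := by
    rw [div_eq_iff hdT.ne'] at hTeq; exact hTeq
  have hSTle : φ * ((a : ℝ) - u) ≤ ((S ∪ T).ncard : ℝ) := by
    have h := phiM_le hfin (Set.union_subset hSE hTE) (hu ▸ hua)
    rw [le_div_iff₀ hdU] at h
    linarith
  have hIle : φ * ((a : ℝ) - i) ≤ ((S ∩ T).ncard : ℝ) := by
    rcases lt_or_ge i a with hlt | hge
    · have hdI : (0 : ℝ) < (a : ℝ) - i := by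
        have := (Nat.cast_lt (α := ℝ)).2 hlt; linarith
      have h := phiM_le hfin ((Set.inter_subset_left).trans hSE) hlt
      rw [le_div_iff₀ hdI] at h
      linarith
    · have hieq : i = a := le_antisymm hia hge
      have : ((a : ℝ) - i) = 0 := by rw [hieq]; ring
      rw [this, mul_zero]
      exact Nat.cast_nonneg _
  have hcardsum : ((S ∪ T).ncard : ℝ) + ((S ∩ T).ncard : ℝ) = (S.ncard : ℝ) + (T.ncard : ℝ) := by
    have := Set.ncard_union_add_ncard_inter S T hSfin hTfin
    exact_mod_cast this
  have hsubmodR : (u : ℝ) + (i : ℝ) ≤ (s : ℝ) + (t : ℝ) := by exact_mod_cast hsubmod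
  have hx : (0 : ℝ) ≤ φ * (((s : ℝ) + t) - ((u : ℝ) + i)) :=
    mul_nonneg hφ0.le (by linarith)
  have hUeq : ((S ∪ T).ncard : ℝ) = φ * ((a : ℝ) - u) := by linarith
  -- card of T \ S
  have hUcard : (S ∪ T).ncard = S.ncard + (T \ S).ncard := by
    rw [← Set.union_diff_self, Set.ncard_union_eq disjoint_sdiff_right hSfin (hTfin.diff (t := S))]
  have hTSval : ((T \ S).ncard : ℝ) = φ * ((s : ℝ) - u) := by
    have : ((S ∪ T).ncard : ℝ) = (S.ncard : ℝ) + ((T \ S).ncard : ℝ) := by exact_mod_cast hUcard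
    linarith
  have hTS1 : 1 ≤ (T \ S).ncard := by
    rw [Nat.one_le_iff_ne_zero, ← Nat.pos_iff_ne_zero, Set.ncard_pos (hTfin.diff (t := S))]
    exact hTS
  have huslt : u < s := by
    by_contra h
    push_neg at h
    have : u = s := le_antisymm hus h
    rw [this, sub_self, mul_zero] at hTSval
    have : ((T \ S).ncard : ℝ) ≥ 1 := by exact_mod_cast hTS1
    linarith
  have hdsu : (0 : ℝ) < (s : ℝ) - u := by
    have := (Nat.cast_lt (α := ℝ)).2 huslt; linarith
  have goal2 : ((T \ S).ncard : ℝ) / ((s : ℝ) - (u : ℝ)) = φ := by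
    rw [div_eq_iff hdsu.ne']
    linarith
  refine ⟨huslt, goal2, ?_, ?_⟩
  -- restriction part
  all_goals {
    have hNE : (M ↾ (M.E \ S)).E = M.E \ S := rfl
    have hrs : mrk (M ↾ (M.E \ S)) (M.E \ S) = s := mrk_restrict M subset_rfl
    -- lower bound: every ratio in the restricted Phi set is ≥ φ
    have hlb : ∀ x ∈ {x : ℝ | ∃ A ⊆ (M ↾ (M.E \ S)).E,
        mrk (M ↾ (M.E \ S)) ((M ↾ (M.E \ S)).E \ A) < mrk (M ↾ (M.E \ S)) (M ↾ (M.E \ S)).E ∧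
        x = (A.ncard : ℝ) / ((mrk (M ↾ (M.E \ S)) (M ↾ (M.E \ S)).E : ℝ) -
          (mrk (M ↾ (M.E \ S)) ((M ↾ (M.E \ S)).E \ A) : ℝ))}, φ ≤ x := by
      rintro x ⟨A, hA, hlt, rfl⟩
      rw [hNE] at hA hlt ⊢
      have hdd : (M.E \ S) \ A = M.E \ (S ∪ A) := by rw [Set.diff_diff]
      have hmr : mrk (M ↾ (M.E \ S)) ((M.E \ S) \ A) = mrk M (M.E \ (S ∪ A)) := by
        rw [← hdd]; exact mrk_restrict M Set.diff_subset
      rw [hrs, hmr] at hlt ⊢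
      set uA := mrk M (M.E \ (S ∪ A)) with huA
      have hAfin : A.Finite := hfin.subset (hA.trans Set.diff_subset)
      have huAa : uA < a := lt_of_lt_of_le hlt (le_of_lt hSlt)
      have hduA : (0 : ℝ) < (a : ℝ) - uA := by
        have := (Nat.cast_lt (α := ℝ)).2 huAa; linarith
      have h := phiM_le hfin (Set.union_subset hSE (hA.trans Set.diff_subset)) (huA ▸ huAa)
      rw [le_div_iff₀ hduA] at h
      have hdisj : Disjoint S A := ((Set.subset_diff.1 hA).2).symm
      have hSA : ((S ∪ A).ncard : ℝ) = (S.ncard : ℝ) + (A.ncard : ℝ) := by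
        exact_mod_cast Set.ncard_union_eq hdisj hSfin hAfin
      have hdsuA : (0 : ℝ) < (s : ℝ) - uA := by
        have := (Nat.cast_lt (α := ℝ)).2 hlt; linarith
      rw [le_div_iff₀ hdsuA]
      linarith
    have hmem : φ ∈ {x : ℝ | ∃ A ⊆ (M ↾ (M.E \ S)).E,
        mrk (M ↾ (M.E \ S)) ((M ↾ (M.E \ S)).E \ A) < mrk (M ↾ (M.E \ S)) (M ↾ (M.E \ S)).E ∧
        x = (A.ncard : ℝ) / ((mrk (M ↾ (M.E \ S)) (M ↾ (M.E \ S)).E : ℝ) -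
          (mrk (M ↾ (M.E \ S)) ((M ↾ (M.E \ S)).E \ A) : ℝ))} := by
      refine ⟨T \ S, ?_, ?_, ?_⟩
      · rw [hNE]; exact Set.diff_subset_diff_left hTE
      · rw [hNE, hrs]
        have hdd : (M.E \ S) \ (T \ S) = M.E \ (S ∪ T) := by
          rw [Set.diff_diff, Set.union_diff_self]
        rw [hdd, mrk_restrict M (hdd ▸ Set.diff_subset)]
        exact huslt
      · rw [hNE, hrs]
        have hdd : (M.E \ S) \ (T \ S) = M.E \ (S ∪ T) := by
          rw [Set.diff_diff, Set.union_diff_self]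
        rw [hdd, mrk_restrict M (hdd ▸ Set.diff_subset)]
        exact goal2.symm
    have hPhiN : PhiM (M ↾ (M.E \ S)) = φ := by
      apply le_antisymm
      · exact csInf_le ⟨φ, hlb⟩ hmem
      · exact le_csInf ⟨φ, hmem⟩ hlb
    first
    | exact hPhiN
    | { refine ⟨?_, ?_, ?_⟩
        · rw [hNE]; exact Set.diff_subset_diff_left hTE
        · rw [hNE, hrs]
          have hdd : (M.E \ S) \ (T \ S) = M.E \ (S ∪ T) := by
            rw [Set.diff_diff, Set.union_diff_self]
          rw [hdd, mrk_restrict M (hdd ▸ Set.diff_subset)]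
          exact huslt
        · rw [hNE, hrs, hPhiN]
          have hdd : (M.E \ S) \ (T \ S) = M.E \ (S ∪ T) := by
            rw [Set.diff_diff, Set.union_diff_self]
          rw [hdd, mrk_restrict M (hdd ▸ Set.diff_subset)]
          exact goal2 }
  }
end

section
/- Let M be a loopless matroid on a finite nonempty ground set E, and let ℓ* be the ideal relative loads arising from any Φ-decomposition of M. Then 1 / (max_{e∈E} ℓ*(e)) = Φ_M. -/
open Set Matroid

variable {α : Type*}

/-! ### Auxiliary lemmas -/

section Aux

variable {M : Matroid α} {A B X Y : Set α}

lemma mrkSet_nonempty (M : Matroid α) (A : Set α) :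
    {n : ℕ | ∃ I, M.Indep I ∧ I ⊆ A ∧ I.ncard = n}.Nonempty :=
  ⟨0, ∅, M.empty_indep, empty_subset _, ncard_empty _⟩

lemma mrkSet_bddAbove (hfin : M.E.Finite) (A : Set α) :
    BddAbove {n : ℕ | ∃ I, M.Indep I ∧ I ⊆ A ∧ I.ncard = n} := by
  refine ⟨M.E.ncard, fun n hn => ?_⟩
  obtain ⟨I, hI, _, rfl⟩ := hn
  exact ncard_le_ncard hI.subset_ground hfin

lemma mrk_le_ncard (hA : A.Finite) : mrk M A ≤ A.ncard := by
  refine csSup_le (mrkSet_nonempty M A) ?_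
  rintro n ⟨I, hI, hIA, rfl⟩
  exact ncard_le_ncard hIA hA

lemma mrk_mono_s7 (hfin : M.E.Finite) (h : A ⊆ B) : mrk M A ≤ mrk M B := by
  refine csSup_le_csSup (mrkSet_bddAbove hfin B) (mrkSet_nonempty M A) ?_
  rintro n ⟨I, hI, hIA, rfl⟩
  exact ⟨I, hI, hIA.trans h, rfl⟩

lemma mrk_empty (M : Matroid α) : mrk M (∅ : Set α) = 0 := by
  refine Nat.le_zero.mp (csSup_le (mrkSet_nonempty M ∅) ?_)
  rintro n ⟨I, hI, hIA, rfl⟩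
  simp [subset_empty_iff.mp hIA]

lemma one_le_mrk (hfin : M.E.Finite) {e : α} (he : e ∈ A) (hi : M.Indep {e}) :
    1 ≤ mrk M A :=
  le_csSup (mrkSet_bddAbove hfin A) ⟨{e}, hi, singleton_subset_iff.mpr he, ncard_singleton e⟩

lemma mrk_restrict_s7 (h : Y ⊆ X) : mrk (M ↾ X) Y = mrk M Y := by
  unfold mrk
  congr 1
  ext n
  constructor
  · rintro ⟨I, hI, hIY, rfl⟩; exact ⟨I, (restrict_indep_iff.1 hI).1, hIY, rfl⟩
  · rintro ⟨I, hI, hIY, rfl⟩; exact ⟨I, restrict_indep_iff.2 ⟨hI, hIY.trans h⟩, hIY, rfl⟩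

/-- The defining set of ratios for `PhiM`. -/
def phiSet (M : Matroid α) : Set ℝ :=
  {x : ℝ | ∃ A ⊆ M.E, mrk M (M.E \ A) < mrk M M.E ∧
    x = (A.ncard : ℝ) / ((mrk M M.E : ℝ) - (mrk M (M.E \ A) : ℝ))}

lemma phiM_eq (M : Matroid α) : PhiM M = sInf (phiSet M) := rfl

lemma phiSet_lb (hfin : M.E.Finite) {x : ℝ} (hx : x ∈ phiSet M) :
    1 / (M.E.ncard : ℝ) ≤ x := by
  obtain ⟨A, hAE, hlt, rfl⟩ := hx
  have hAne : A.Nonempty := by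
    rcases A.eq_empty_or_nonempty with rfl | h
    · simp at hlt
    · exact h
  have hAfin := hfin.subset hAE
  have h1A : (1 : ℝ) ≤ (A.ncard : ℝ) := by
    exact_mod_cast (Set.ncard_pos hAfin).mpr hAne
  have hdpos : (0 : ℝ) < (mrk M M.E : ℝ) - (mrk M (M.E \ A) : ℝ) := by
    linarith [Nat.cast_lt (α := ℝ).mpr hlt]
  have hdle : (mrk M M.E : ℝ) - (mrk M (M.E \ A) : ℝ) ≤ (M.E.ncard : ℝ) := by
    have h1 : mrk M M.E ≤ M.E.ncard := mrk_le_ncard hfin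
    have h2 : (0:ℝ) ≤ (mrk M (M.E \ A) : ℝ) := by positivity
    have := Nat.cast_le (α := ℝ).mpr h1
    linarith
  calc 1 / (M.E.ncard : ℝ) ≤ 1 / ((mrk M M.E : ℝ) - (mrk M (M.E \ A) : ℝ)) :=
        one_div_le_one_div_of_le hdpos hdle
    _ ≤ (A.ncard : ℝ) / ((mrk M M.E : ℝ) - (mrk M (M.E \ A) : ℝ)) := by gcongr

lemma phiSet_nonempty (hfin : M.E.Finite) (hne : M.E.Nonempty)
    (hloop : ∀ e ∈ M.E, M.Indep {e}) : (phiSet M).Nonempty := by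
  obtain ⟨e, he⟩ := hne
  refine ⟨_, M.E, Subset.rfl, ?_, rfl⟩
  rw [diff_self, mrk_empty]
  exact lt_of_lt_of_le Nat.one_pos (one_le_mrk hfin he (hloop e he))

lemma phiM_lb (hfin : M.E.Finite) (hne : M.E.Nonempty)
    (hloop : ∀ e ∈ M.E, M.Indep {e}) : 1 / (M.E.ncard : ℝ) ≤ PhiM M :=
  le_csInf (phiSet_nonempty hfin hne hloop) fun _ hx => phiSet_lb hfin hx

lemma phiM_pos (hfin : M.E.Finite) (hne : M.E.Nonempty)
    (hloop : ∀ e ∈ M.E, M.Indep {e}) : 0 < PhiM M := by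
  refine lt_of_lt_of_le ?_ (phiM_lb hfin hne hloop)
  have : 0 < M.E.ncard := (Set.ncard_pos hfin).mpr hne
  positivity

lemma phiSet_bddBelow (M : Matroid α) : BddBelow (phiSet M) := by
  refine ⟨0, fun x hx => ?_⟩
  obtain ⟨A, hAE, hlt, rfl⟩ := hx
  have hdpos : (0 : ℝ) ≤ (mrk M M.E : ℝ) - (mrk M (M.E \ A) : ℝ) := by
    have := Nat.cast_lt (α := ℝ).mpr hlt; linarith
  positivity

lemma phiM_le_s7 {x : ℝ} (hx : x ∈ phiSet M) : PhiM M ≤ x :=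
  csInf_le (phiSet_bddBelow M) hx

lemma ratio_step {F a c rX rY rA : ℝ} (h1 : rY < rX) (h2 : rA < rY)
    (hc : c / (rX - rY) = F) (key : F ≤ (a + c) / (rX - rA)) : F ≤ a / (rY - rA) := by
  have hc' : c = F * (rX - rY) := (div_eq_iff (by linarith : rX - rY ≠ 0)).mp hc
  have key' : F * (rX - rA) ≤ a + c := (le_div_iff₀ (by linarith)).mp key
  have : F * (rY - rA) ≤ a := by nlinarith
  exact (le_div_iff₀ (by linarith)).mpr this

lemma phi_mono (M : Matroid α) (hfin : M.E.Finite) {X Y : Set α}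
    (hXE : X ⊆ M.E) (hYX : Y ⊆ X) (hYne : Y.Nonempty)
    (hloop : ∀ e ∈ M.E, M.Indep {e})
    (hA : AttainsPhi (M ↾ X) (X \ Y)) :
    PhiM (M ↾ X) ≤ PhiM (M ↾ Y) := by
  have hXfin : X.Finite := hfin.subset hXE
  have hYE : Y ⊆ M.E := hYX.trans hXE
  obtain ⟨-, hlt0, heq0⟩ := hA
  rw [restrict_ground_eq] at hlt0 heq0
  rw [diff_diff_cancel_left hYX] at hlt0 heq0
  rw [mrk_restrict_s7 (Subset.rfl), mrk_restrict_s7 hYX] at hlt0 heq0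
  have hYloop : ∀ e ∈ (M ↾ Y).E, (M ↾ Y).Indep {e} := by
    intro e he
    rw [restrict_ground_eq] at he
    exact restrict_indep_iff.2 ⟨hloop e (hYE he), singleton_subset_iff.2 he⟩
  refine le_csInf (phiSet_nonempty ?_ ?_ hYloop) ?_
  · rw [restrict_ground_eq]; exact hfin.subset hYE
  · rw [restrict_ground_eq]; exact hYne
  rintro x ⟨A, hAg, hlt, rfl⟩
  rw [restrict_ground_eq] at hAg hlt ⊢
  rw [mrk_restrict_s7 (Subset.rfl), mrk_restrict_s7 (diff_subset)] at hlt ⊢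
  have hAX : A ∪ (X \ Y) ⊆ X := union_subset (hAg.trans hYX) diff_subset
  have hset : X \ (A ∪ (X \ Y)) = Y \ A := by
    rw [union_comm, ← diff_diff, diff_diff_cancel_left hYX]
  have hdisj : Disjoint A (X \ Y) := Set.disjoint_left.mpr fun {z} hz hz' => hz'.2 (hAg hz)
  have hcard : (A ∪ (X \ Y)).ncard = A.ncard + (X \ Y).ncard :=
    ncard_union_eq hdisj (hXfin.subset (hAg.trans hYX)) (hXfin.subset diff_subset)
  have hmem : ((A ∪ (X \ Y)).ncard : ℝ) /
      ((mrk (M ↾ X) (M ↾ X).E : ℝ) - (mrk (M ↾ X) ((M ↾ X).E \ (A ∪ (X \ Y))) : ℝ))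
      ∈ phiSet (M ↾ X) := by
    refine ⟨A ∪ (X \ Y), by rw [restrict_ground_eq]; exact hAX, ?_, rfl⟩
    rw [restrict_ground_eq, hset, mrk_restrict_s7 Subset.rfl,
      mrk_restrict_s7 ((diff_subset).trans hYX)]
    exact lt_of_lt_of_le hlt (mrk_mono_s7 hfin hYX)
  have key := phiM_le_s7 hmem
  rw [restrict_ground_eq, hset, mrk_restrict_s7 Subset.rfl,
    mrk_restrict_s7 ((diff_subset).trans hYX), hcard] at key
  push_cast at key
  exact ratio_step (by exact_mod_cast hlt0) (by exact_mod_cast hlt) heq0 key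

lemma exists_boundary {Q : ℕ → Prop} (k : ℕ) (h0 : Q 0) (hk : ¬ Q k) :
    ∃ i < k, Q i ∧ ¬ Q (i + 1) := by
  induction k with
  | zero => exact absurd h0 hk
  | succ n ih =>
    by_cases hq : Q n
    · exact ⟨n, Nat.lt_succ_self n, hq, hk⟩
    · obtain ⟨i, hi, h⟩ := ih hq
      exact ⟨i, hi.trans (Nat.lt_succ_self n), h⟩

end Aux

/-- The reciprocal of the maximum ideal relative load (arising from any Φ-decomposition)
equals `Φ_M`. -/
theorem stmt_7 (M : Matroid α) (hfin : M.E.Finite) (hne : M.E.Nonempty)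
    (hloopless : ∀ e ∈ M.E, M.Indep {e})
    (k : ℕ) (Es : ℕ → Set α) (h0 : Es 0 = M.E) (hk : Es k = ∅)
    (hss : ∀ i < k, Es (i + 1) ⊂ Es i)
    (hatt : ∀ i < k, AttainsPhi (M ↾ Es i) (Es i \ Es (i + 1)))
    (lstar : α → ℝ)
    (hl : ∀ i < k, ∀ e ∈ Es i \ Es (i + 1), lstar e = 1 / PhiM (M ↾ Es i)) :
    1 / sSup (lstar '' M.E) = PhiM M := by
  have hk0 : 0 < k := by
    rcases Nat.eq_zero_or_pos k with rfl | h
    · rw [h0] at hk; exact absurd hk hne.ne_empty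
    · exact h
  have hEsub : ∀ i, i ≤ k → Es i ⊆ M.E := by
    intro i
    induction i with
    | zero => intro _; rw [h0]
    | succ n ih =>
      intro hi
      exact ((hss n (Nat.lt_of_succ_le hi)).subset).trans
        (ih (Nat.le_of_lt (Nat.lt_of_succ_le hi)))
  have hΦpos : 0 < PhiM M := phiM_pos hfin hne hloopless
  have key : ∀ i, i < k → PhiM M ≤ PhiM (M ↾ Es i) := by
    intro i
    induction i with
    | zero => intro _; rw [h0, restrict_ground_eq_self]
    | succ n ih =>
      intro hn1
      have hn : n < k := Nat.lt_of_succ_lt hn1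
      refine (ih hn).trans
        (phi_mono M hfin (hEsub n hn.le) (hss n hn).subset ?_ hloopless (hatt n hn))
      obtain ⟨x, hx, -⟩ := exists_of_ssubset (hss (n + 1) hn1)
      exact ⟨x, hx⟩
  have hub : ∀ e ∈ M.E, lstar e ≤ 1 / PhiM M := by
    intro e he
    obtain ⟨i, hi, hmem⟩ :=
      exists_boundary (Q := fun n => e ∈ Es n) k (by show e ∈ Es 0; rw [h0]; exact he)
        (by show ¬ e ∈ Es k; rw [hk]; exact notMem_empty e)
    rw [hl i hi e ⟨hmem.1, hmem.2⟩]
    exact one_div_le_one_div_of_le hΦpos (key i hi)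
  obtain ⟨e0, he01, he02⟩ := exists_of_ssubset (hss 0 hk0)
  have he0E : e0 ∈ M.E := h0 ▸ he01
  have hval : lstar e0 = 1 / PhiM M := by
    rw [hl 0 hk0 e0 ⟨he01, he02⟩, h0, restrict_ground_eq_self]
  have hsup : sSup (lstar '' M.E) = 1 / PhiM M := by
    apply le_antisymm
    · exact csSup_le (hne.image lstar) (by rintro x ⟨e, he, rfl⟩; exact hub e he)
    · exact le_csSup ⟨1 / PhiM M, by rintro x ⟨e, he, rfl⟩; exact hub e he⟩
        ⟨e0, he0E, hval⟩
  rw [hsup, one_div_one_div]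
end
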